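/- Let X be a set, let μ₁ and μ₂ be sub-distributions over X with finite support, and let (E_n)_{n∈ℕ} be a monotonically increasing chain of cost functions X × X → [0,∞] converging pointwise to E : X × X → [0,∞]. Then the Kantorovich lifting is continuous in the cost: K_E(μ₁, μ₂) = lim_{n→∞} K_{E_n}(μ₁, μ₂) = sup_{n∈ℕ} K_{E_n}(μ₁, μ₂). -/

import Mathlib

open scoped ENNReal

/-- A sub-distribution over `X`: a `[0,∞]`-valued mass function with total mass at most 1
(countability of the support is automatic since the total mass is finite). -/
def IsSubdist {X : Type*} (μ : X → ℝ≥0∞) : Prop := ∑' x, μ x ≤ 1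

/-- A (probability) distribution over `X`: total mass exactly 1. -/
def IsDist {X : Type*} (μ : X → ℝ≥0∞) : Prop := ∑' x, μ x = 1

/-- `μ` is a coupling of `μ₁` and `μ₂`: its first and second marginals are `μ₁` and `μ₂`. -/
def IsCoupling {X : Type*} (μ : X × X → ℝ≥0∞) (μ₁ μ₂ : X → ℝ≥0∞) : Prop :=
  (∀ x₁, ∑' x₂, μ (x₁, x₂) = μ₁ x₁) ∧ (∀ x₂, ∑' x₁, μ (x₁, x₂) = μ₂ x₂)

/-- Expected cost of `E` under a mass function `μ` on pairs. -/
noncomputable def expCost {X : Type*} (E : X × X → ℝ≥0∞) (μ : X × X → ℝ≥0∞) : ℝ≥0∞ :=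
  ∑' p, E p * μ p

/-- Kantorovich lifting of a cost function `E` (infimum of expected cost over couplings;
`∞` if there is no coupling). -/
noncomputable def kant {X : Type*} (E : X × X → ℝ≥0∞) (μ₁ μ₂ : X → ℝ≥0∞) : ℝ≥0∞ :=
  ⨅ (μ : X × X → ℝ≥0∞) (_ : IsCoupling μ μ₁ μ₂), expCost E μ

/-- Total variation distance `(1/2) Σ_x |μ₁(x) − μ₂(x)|`. -/
noncomputable def tv {X : Type*} (μ₁ μ₂ : X → ℝ≥0∞) : ℝ≥0∞ :=
  (1 / 2) * ∑' x, max (μ₁ x - μ₂ x) (μ₂ x - μ₁ x)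

open Filter

open Filter in
private lemma lsc_const_mul_ennreal (c : ℝ≥0∞) :
    LowerSemicontinuous (fun x : ℝ≥0∞ => c * x) := by
  rcases eq_or_ne c ⊤ with rfl | hc
  · intro x y hy
    have hx : x ≠ 0 := by
      rintro rfl; simp at hy
    have hx' : (0 : ℝ≥0∞) < x := pos_iff_ne_zero.2 hx
    have : ∀ᶠ z in nhds x, z ∈ Set.Ioi (0 : ℝ≥0∞) :=
      IsOpen.mem_nhds isOpen_Ioi hx'
    filter_upwards [this] with z hz
    have : (⊤ : ℝ≥0∞) * z = ⊤ := ENNReal.top_mul (pos_iff_ne_zero.1 hz)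
    rw [this]
    exact lt_of_lt_of_le hy le_top
  · exact (ENNReal.continuous_const_mul hc).lowerSemicontinuous

private lemma tsum_iSup_mono_ennreal {ι : Type*} (g : ℕ → ι → ℝ≥0∞)
    (hg : ∀ i, Monotone fun n => g n i) :
    ∑' i, ⨆ n, g n i = ⨆ n, ∑' i, g n i := by
  rw [ENNReal.tsum_eq_iSup_sum]
  have key : ∀ s : Finset ι, ∑ i ∈ s, ⨆ n, g n i = ⨆ n, ∑ i ∈ s, g n i := fun s =>
    ENNReal.finsetSum_iSup_of_monotone hg
  simp_rw [key]
  rw [iSup_comm]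
  congr 1
  ext n
  exact ENNReal.tsum_eq_iSup_sum.symm


/-- **Continuity of the Kantorovich lifting in the cost**, for sub-distributions with finite
support: if `En` is a monotonically increasing chain of cost functions converging pointwise to
`E`, then `K_E(μ₁,μ₂) = lim_n K_{En n}(μ₁,μ₂) = sup_n K_{En n}(μ₁,μ₂)`. -/
theorem kant_tendsto_of_finite_support {X : Type*} (μ₁ μ₂ : X → ℝ≥0∞)
    (h₁ : IsSubdist μ₁) (h₂ : IsSubdist μ₂)
    (hfin₁ : (Function.support μ₁).Finite) (hfin₂ : (Function.support μ₂).Finite)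
    (En : ℕ → X × X → ℝ≥0∞) (hmono : Monotone En)
    (E : X × X → ℝ≥0∞)
    (hlim : ∀ p, Tendsto (fun n => En n p) atTop (nhds (E p))) :
    (kant E μ₁ μ₂ = ⨆ n, kant (En n) μ₁ μ₂) ∧
    Tendsto (fun n => kant (En n) μ₁ μ₂) atTop (nhds (kant E μ₁ μ₂)) := by
  classical
  -- E is the pointwise supremum of the En
  have hE : ∀ p, E p = ⨆ n, En n p := fun p =>
    tendsto_nhds_unique (hlim p) (tendsto_atTop_iSup fun a b h => hmono h p)
  set S₁ := hfin₁.toFinset with hS₁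
  set S₂ := hfin₂.toFinset with hS₂
  have hm₁ : ∀ x, x ∉ S₁ → μ₁ x = 0 := by
    intro x hx
    by_contra h
    exact hx (hfin₁.mem_toFinset.2 h)
  have hm₂ : ∀ x, x ∉ S₂ → μ₂ x = 0 := by
    intro x hx
    by_contra h
    exact hx (hfin₂.mem_toFinset.2 h)
  -- characterization of couplings by finitely many closed conditions
  have hQ : ∀ μ : X × X → ℝ≥0∞, IsCoupling μ μ₁ μ₂ ↔
      ((∀ p : X × X, p ∉ S₁ ×ˢ S₂ → μ p = 0) ∧
       (∀ x₁, ∑ x₂ ∈ S₂, μ (x₁, x₂) = μ₁ x₁) ∧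
       (∀ x₂, ∑ x₁ ∈ S₁, μ (x₁, x₂) = μ₂ x₂)) := by
    intro μ
    constructor
    · rintro ⟨hμ₁, hμ₂⟩
      have hb : ∀ p : X × X, μ p ≤ μ₁ p.1 := fun p =>
        (hμ₁ p.1) ▸ ENNReal.le_tsum p.2
      have hb' : ∀ p : X × X, μ p ≤ μ₂ p.2 := fun p =>
        (hμ₂ p.2) ▸ ENNReal.le_tsum p.1
      have hz : ∀ p : X × X, p ∉ S₁ ×ˢ S₂ → μ p = 0 := by
        intro p hp
        rw [Finset.mem_product, not_and_or] at hp
        rcases hp with h | h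
        · exact le_antisymm ((hb p).trans (hm₁ _ h).le) (zero_le)
        · exact le_antisymm ((hb' p).trans (hm₂ _ h).le) (zero_le)
      refine ⟨hz, fun x₁ => ?_, fun x₂ => ?_⟩
      · rw [← hμ₁ x₁]
        exact (tsum_eq_sum fun x₂ hx₂ => hz (x₁, x₂) (by simp [Finset.mem_product, hx₂])).symm
      · rw [← hμ₂ x₂]
        exact (tsum_eq_sum fun x₁ hx₁ => hz (x₁, x₂) (by simp [Finset.mem_product, hx₁])).symm
    · rintro ⟨hz, hs₁, hs₂⟩
      constructor
      · intro x₁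
        rw [tsum_eq_sum (s := S₂) fun x₂ hx₂ => hz (x₁, x₂) (by simp [Finset.mem_product, hx₂])]
        exact hs₁ x₁
      · intro x₂
        rw [tsum_eq_sum (s := S₁) fun x₁ hx₁ => hz (x₁, x₂) (by simp [Finset.mem_product, hx₁])]
        exact hs₂ x₂
  set C : Set (X × X → ℝ≥0∞) := {μ | IsCoupling μ μ₁ μ₂} with hCdef
  -- kant as an infimum over C
  have hkant : ∀ E' : X × X → ℝ≥0∞, kant E' μ₁ μ₂ = ⨅ μ ∈ C, expCost E' μ := fun E' => rfl
  -- C is closed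
  have hC_closed : IsClosed C := by
    have : C = {μ : X × X → ℝ≥0∞ | ∀ p : X × X, p ∉ S₁ ×ˢ S₂ → μ p = 0} ∩
        ({μ | ∀ x₁, ∑ x₂ ∈ S₂, μ (x₁, x₂) = μ₁ x₁} ∩
         {μ | ∀ x₂, ∑ x₁ ∈ S₁, μ (x₁, x₂) = μ₂ x₂}) := by
      ext μ
      simpa [C, Set.mem_setOf_eq, and_assoc] using hQ μ
    rw [this]
    refine IsClosed.inter ?_ (IsClosed.inter ?_ ?_)
    · have : {μ : X × X → ℝ≥0∞ | ∀ p : X × X, p ∉ S₁ ×ˢ S₂ → μ p = 0} =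
          ⋂ p : X × X, {μ | p ∉ S₁ ×ˢ S₂ → μ p = 0} := by
        ext μ; simp
      rw [this]
      refine isClosed_iInter fun p => ?_
      by_cases hp : p ∈ S₁ ×ˢ S₂
      · simp [hp]
      · have : {μ : X × X → ℝ≥0∞ | p ∉ S₁ ×ˢ S₂ → μ p = 0} = {μ | μ p = 0} := by
          ext μ; simp [hp]
        rw [this]
        exact isClosed_eq (continuous_apply p) continuous_const
    · have : {μ : X × X → ℝ≥0∞ | ∀ x₁, ∑ x₂ ∈ S₂, μ (x₁, x₂) = μ₁ x₁} =
          ⋂ x₁, {μ | ∑ x₂ ∈ S₂, μ (x₁, x₂) = μ₁ x₁} := by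
        ext μ; simp
      rw [this]
      exact isClosed_iInter fun x₁ =>
        isClosed_eq (continuous_finset_sum _ fun x₂ _ => continuous_apply (x₁, x₂))
          continuous_const
    · have : {μ : X × X → ℝ≥0∞ | ∀ x₂, ∑ x₁ ∈ S₁, μ (x₁, x₂) = μ₂ x₂} =
          ⋂ x₂, {μ | ∑ x₁ ∈ S₁, μ (x₁, x₂) = μ₂ x₂} := by
        ext μ; simp
      rw [this]
      exact isClosed_iInter fun x₂ =>
        isClosed_eq (continuous_finset_sum _ fun x₁ _ => continuous_apply (x₁, x₂))
          continuous_const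
  have hC_cpt : IsCompact C := hC_closed.isCompact
  -- expCost (En n) is lower semicontinuous
  have hlsc : ∀ n, LowerSemicontinuous fun μ : X × X → ℝ≥0∞ => expCost (En n) μ := by
    intro n
    have : (fun μ : X × X → ℝ≥0∞ => expCost (En n) μ) =
        fun μ => ∑' p, En n p * μ p := rfl
    rw [this]
    exact lowerSemicontinuous_tsum fun p =>
      LowerSemicontinuous.comp (lsc_const_mul_ennreal (En n p)) (continuous_apply p)
  -- expCost E is the sup of expCost (En n)
  have hsupcost : ∀ μ : X × X → ℝ≥0∞, expCost E μ = ⨆ n, expCost (En n) μ := by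
    intro μ
    have : expCost E μ = ∑' p, ⨆ n, En n p * μ p := by
      unfold expCost
      congr 1
      ext p
      rw [hE p, ENNReal.iSup_mul]
    rw [this]
    exact tsum_iSup_mono_ennreal _ fun p a b h => mul_le_mul_left (hmono h p) _
  -- easy direction
  have hle : (⨆ n, kant (En n) μ₁ μ₂) ≤ kant E μ₁ μ₂ := by
    refine iSup_le fun n => ?_
    refine iInf_mono fun μ => iInf_mono fun _ => ?_
    refine ENNReal.tsum_le_tsum fun p => mul_le_mul_left ?_ _
    rw [hE p]; exact le_iSup (fun n => En n p) n
  -- hard direction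
  have hge : kant E μ₁ μ₂ ≤ ⨆ n, kant (En n) μ₁ μ₂ := by
    by_contra hcon
    push_neg at hcon
    obtain ⟨t, ht1, ht2⟩ := exists_between hcon
    -- C is nonempty, else both sides are ⊤
    have hCne : C.Nonempty := by
      rcases C.eq_empty_or_nonempty with hemp | hne
      · exfalso
        have : kant (En 0) μ₁ μ₂ = ⊤ := by
          rw [hkant]
          simp [hemp]
        have h0 : (⊤ : ℝ≥0∞) ≤ ⨆ n, kant (En n) μ₁ μ₂ := this ▸ le_iSup (fun n => kant (En n) μ₁ μ₂) 0
        exact absurd ht1 (not_lt.2 (le_trans le_top h0))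
      · exact hne
    -- open cover
    have hcover : C ⊆ ⋃ n, {μ : X × X → ℝ≥0∞ | t < expCost (En n) μ} := by
      intro μ hμ
      have h1 : kant E μ₁ μ₂ ≤ expCost E μ := by
        rw [hkant]
        exact iInf₂_le μ hμ
      have h2 : t < ⨆ n, expCost (En n) μ := by
        rw [← hsupcost μ]
        exact lt_of_lt_of_le ht2 h1
      obtain ⟨n, hn⟩ := lt_iSup_iff.1 h2
      exact Set.mem_iUnion.2 ⟨n, hn⟩
    obtain ⟨s, hs⟩ := hC_cpt.elim_finite_subcover _
      (fun n => (lowerSemicontinuous_iff_isOpen_preimage.1 (hlsc n)) t) hcover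
    -- s is nonempty
    obtain ⟨μ₀, hμ₀⟩ := hCne
    have hsne : s.Nonempty := by
      rcases Set.mem_iUnion₂.1 (hs hμ₀) with ⟨n, hn, _⟩
      exact ⟨n, hn⟩
    set N := s.max' hsne with hN
    have hall : ∀ μ ∈ C, t < expCost (En N) μ := by
      intro μ hμ
      rcases Set.mem_iUnion₂.1 (hs hμ) with ⟨n, hn, hlt⟩
      exact lt_of_lt_of_le hlt
        (ENNReal.tsum_le_tsum fun p => mul_le_mul_left (hmono (s.le_max' n hn) p) _)
    have : t ≤ kant (En N) μ₁ μ₂ := by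
      rw [hkant]
      exact le_iInf₂ fun μ hμ => (hall μ hμ).le
    exact absurd (this.trans (le_iSup (fun n => kant (En n) μ₁ μ₂) N)) (not_le.2 ht1)
  have heq : kant E μ₁ μ₂ = ⨆ n, kant (En n) μ₁ μ₂ := le_antisymm hge hle
  refine ⟨heq, ?_⟩
  rw [heq]
  exact tendsto_atTop_iSup fun a b h =>
    iInf_mono fun μ => iInf_mono fun _ =>
      ENNReal.tsum_le_tsum fun p => mul_le_mul_left (hmono h p) _
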